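/- For a unary function S : ℕ → ℤ of the form S(x) = a₀ + a₁x with a₁ ≠ 0 (additive structure), ⟨B,S⟩ is an ℕ-Induction Model only if 1 ∈ B or B is infinite. -/

import Mathlib

/-- Cumulative closure `Cl_i(⟨B,S⟩)` for a unary generating function. -/
def clos1 (S : ℕ+ → ℤ) (B : Set ℕ+) : ℕ → Set ℕ+
  | 0 => B
  | i + 1 => clos1 S B i ∪ {n : ℕ+ | ∃ x ∈ clos1 S B i, S x = (n : ℤ)}

/-- `Sⁱ(B)` for a unary generating function. -/
def spow1 (S : ℕ+ → ℤ) (B : Set ℕ+) : ℕ → Set ℕ+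
  | 0 => B
  | i + 1 => {n : ℕ+ | ∃ x ∈ clos1 S B i, S x = (n : ℤ)}

/-- For a unary `S(x) = a₀ + a₁x` with `a₁ ≠ 0` (additive structure), `⟨B,S⟩` is an
ℕ-Induction Model only if `1 ∈ B` or `B` is infinite. -/
theorem unary_additive_necessary (a₀ a₁ : ℤ) (ha₁ : a₁ ≠ 0) (B : Set ℕ+)
    (hne : B.Nonempty)
    (hIM : (⋃ i, spow1 (fun x => a₀ + a₁ * (x : ℤ)) B i) = Set.univ) :
    (1 : ℕ+) ∈ B ∨ B.Infinite := by
  by_contra hcon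
  push_neg at hcon
  obtain ⟨h1, hfin⟩ := hcon
  have hfin : B.Finite := hfin
  set S : ℕ+ → ℤ := fun x => a₀ + a₁ * (x : ℤ) with hS
  -- key: every positive natural is in B or is in the image of S
  have key : ∀ n : ℕ+, n ∈ B ∨ ∃ x : ℕ+, a₀ + a₁ * (x : ℤ) = (n : ℤ) := by
    intro n
    have hn : n ∈ ⋃ i, spow1 S B i := by rw [hIM]; trivial
    obtain ⟨i, hi⟩ := Set.mem_iUnion.mp hn
    cases i with
    | zero => exact Or.inl hi
    | succ j =>
      obtain ⟨x, _, hSx⟩ := hi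
      exact Or.inr ⟨x, hSx⟩
  rcases lt_trichotomy a₁ 0 with hneg | hz | hpos
  · -- a₁ ≤ -1 : all n with value > |a₀| are in B, so B is infinite
    have ha₁' : a₁ ≤ -1 := by omega
    have hinf : B.Infinite := by
      apply Set.infinite_of_injective_forall_mem
        (f := fun k : ℕ => (⟨a₀.natAbs + k + 1, by omega⟩ : ℕ+))
      case hi =>
        intro k k' hkk
        have : a₀.natAbs + k + 1 = a₀.natAbs + k' + 1 := congrArg (fun n : ℕ+ => (n : ℕ)) hkk
        omega
      case hf =>
        intro k
        rcases key ⟨a₀.natAbs + k + 1, by omega⟩ with hb | ⟨x, hx⟩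
        · exact hb
        · exfalso
          have hxv : (1 : ℤ) ≤ ((x : ℕ) : ℤ) := by exact_mod_cast x.one_le
          have hval : ((a₀.natAbs + k + 1 : ℕ) : ℤ) = (a₀.natAbs : ℤ) + k + 1 := by push_cast; ring
          have habs : a₀ ≤ (a₀.natAbs : ℤ) := Int.le_natAbs
          have hkz : (0 : ℤ) ≤ (k : ℤ) := Int.ofNat_nonneg k
          simp only [PNat.mk_coe] at hx
          rw [hval] at hx
          nlinarith [hx]
    exact hinf hfin
  · exact ha₁ hz
  · rcases lt_trichotomy a₁ 1 with h | h | h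
    · omega
    · -- a₁ = 1
      subst h
      rcases lt_trichotomy a₀ 0 with ha | ha | ha
      · -- a₀ ≤ -1 : closure is bounded above, contradicting surjectivity
        obtain ⟨M, hM⟩ := (hfin.image (fun b : ℕ+ => (b : ℤ))).bddAbove
        have hMB : ∀ b ∈ B, (b : ℤ) ≤ M := fun b hb => hM (Set.mem_image_of_mem _ hb)
        have hclos : ∀ i, ∀ n ∈ clos1 S B i, (n : ℤ) ≤ M := by
          intro i
          induction i with
          | zero => exact hMB
          | succ j ih =>
            intro n hn
            rcases hn with hn | ⟨x, hx, hSx⟩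
            · exact ih n hn
            · have := ih x hx
              simp only [hS, one_mul] at hSx
              omega
        have hspow : ∀ i, ∀ n ∈ spow1 S B i, (n : ℤ) ≤ M := by
          intro i
          cases i with
          | zero => exact hMB
          | succ j =>
            intro n hn
            obtain ⟨x, hx, hSx⟩ := hn
            have := hclos j x hx
            simp only [hS, one_mul] at hSx
            omega
        -- pick an element bigger than M
        have hbig : ((⟨M.toNat + 1, by omega⟩ : ℕ+) : ℤ) ≤ M := by
          have hn : (⟨M.toNat + 1, by omega⟩ : ℕ+) ∈ ⋃ i, spow1 S B i := by rw [hIM]; trivial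
          obtain ⟨i, hi⟩ := Set.mem_iUnion.mp hn
          exact hspow i _ hi
        have : (M.toNat : ℤ) ≥ M := Int.self_le_toNat M
        simp only [PNat.mk_coe] at hbig
        push_cast at hbig
        omega
      · -- a₀ = 0 : S is the identity, so the closure equals B, and 1 ∈ B
        subst ha
        have hclos : ∀ i, clos1 S B i ⊆ B := by
          intro i
          induction i with
          | zero => exact fun _ h => h
          | succ j ih =>
            intro n hn
            rcases hn with hn | ⟨x, hx, hSx⟩
            · exact ih hn
            · simp only [hS, one_mul, zero_add] at hSx
              have : x = n := by exact_mod_cast hSx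
              exact ih (this ▸ hx)
        have h1mem : (1 : ℕ+) ∈ ⋃ i, spow1 S B i := by rw [hIM]; trivial
        obtain ⟨i, hi⟩ := Set.mem_iUnion.mp h1mem
        apply h1
        cases i with
        | zero => exact hi
        | succ j =>
          obtain ⟨x, hx, hSx⟩ := hi
          simp only [hS, one_mul, zero_add] at hSx
          have : x = 1 := by exact_mod_cast hSx
          exact hclos j (this ▸ hx)
      · -- a₀ ≥ 1 : S(x) ≥ x + 1 ≥ 2, so 1 cannot be generated
        rcases key 1 with hb | ⟨x, hx⟩
        · exact h1 hb
        · have hxv : (1 : ℤ) ≤ ((x : ℕ) : ℤ) := by exact_mod_cast x.one_le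
          simp only [PNat.one_coe, Nat.cast_one, one_mul] at hx
          omega
    · -- a₁ ≥ 2 : numbers ≡ a₀ + 1 mod a₁ (large enough) are all in B
      have hinf : B.Infinite := by
        have hvalpos : ∀ k : ℕ, (0 : ℤ) < a₀ + a₁ * ((k : ℤ) + a₀.natAbs + 1) + 1 := by
          intro k
          have habs : -a₀ ≤ (a₀.natAbs : ℤ) := by
            rcases Int.natAbs_eq a₀ with he | he <;> omega
          have hk : (0 : ℤ) ≤ (k : ℤ) := Int.ofNat_nonneg k
          nlinarith
        have hval : ∀ k : ℕ,
            (((a₀ + a₁ * ((k : ℤ) + a₀.natAbs + 1) + 1).toNat : ℕ) : ℤ)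
              = a₀ + a₁ * ((k : ℤ) + a₀.natAbs + 1) + 1 :=
          fun k => Int.toNat_of_nonneg (le_of_lt (hvalpos k))
        apply Set.infinite_of_injective_forall_mem
          (f := fun k : ℕ =>
            (⟨(a₀ + a₁ * ((k : ℤ) + a₀.natAbs + 1) + 1).toNat, by
              have h0 := hvalpos k
              omega⟩ : ℕ+))
        case hi =>
          intro k k' hkk
          have h2 : (a₀ + a₁ * ((k : ℤ) + a₀.natAbs + 1) + 1).toNat
              = (a₀ + a₁ * ((k' : ℤ) + a₀.natAbs + 1) + 1).toNat :=
            congrArg (fun n : ℕ+ => (n : ℕ)) hkk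
          have h3 : a₀ + a₁ * ((k : ℤ) + a₀.natAbs + 1) + 1
              = a₀ + a₁ * ((k' : ℤ) + a₀.natAbs + 1) + 1 := by
            rw [← hval k, ← hval k', h2]
          have h4 : a₁ * ((k : ℤ) - k') = 0 := by ring_nf; linarith [h3]
          have h5 : (k : ℤ) = k' := by
            rcases mul_eq_zero.mp h4 with h | h
            · omega
            · omega
          exact_mod_cast h5
        case hf =>
          intro k
          rcases key _ with hb | ⟨x, hx⟩
          · exact hb
          · exfalso
            simp only [PNat.mk_coe] at hx
            rw [hval k] at hx
            have hdvd : a₁ ∣ 1 := ⟨(x : ℤ) - ((k : ℤ) + a₀.natAbs + 1), by linarith [hx]⟩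
            have := Int.le_of_dvd one_pos hdvd
            omega
      exact hinf hfin
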